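/- In the two-user altruistic routing game on the load-balancing network, if additionally 0 < 4δ < r, c ≥ 4L and c < (r − 4δ)L/δ, then for every β ∈ (1/2, 1] the profile (x₁, x₂) = (r, r − δ) is a Nash equilibrium of the game in which user 1 minimizes the perceived cost Ĵ₁ = (1 − β)J₁ + βJ₂ and user 2 minimizes J₂: x₁ = r minimizes Ĵ₁(·, r − δ) over [0, r], and x₂ = r − δ minimizes J₂(r, ·) over [0, r]. -/

import Mathlib

set_option maxHeartbeats 1600000

/-- Elbow latency function with parameters `r, L, δ`. -/
noncomputable def T (r L δ x : ℝ) : ℝ := max 0 (L / δ * (x - r) + L)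

/-- Cost of user 1 in the two-user load-balancing game. -/
noncomputable def J₁ (r L δ c x₁ x₂ : ℝ) : ℝ :=
  x₁ * T r L δ (x₁ + (r - x₂)) + (r - x₁) * (c + T r L δ (x₂ + (r - x₁)))

/-- Cost of user 2 in the two-user load-balancing game. -/
noncomputable def J₂ (r L δ c x₁ x₂ : ℝ) : ℝ :=
  x₂ * T r L δ (x₂ + (r - x₁)) + (r - x₂) * (c + T r L δ (x₁ + (r - x₂)))

/-- Perceived cost of the unilaterally altruistic user 1 with degree of cooperation `β`. -/
noncomputable def Jhat₁ (r L δ c β x₁ x₂ : ℝ) : ℝ :=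
  (1 - β) * J₁ r L δ c x₁ x₂ + β * J₂ r L δ c x₁ x₂

lemma myT_nonneg (r L δ x : ℝ) : 0 ≤ T r L δ x := le_max_left _ _
lemma myT_ge (r L δ x : ℝ) : L / δ * (x - r) + L ≤ T r L δ x := le_max_right _ _
lemma myT_eq (r L δ x : ℝ) (h : 0 ≤ L / δ * (x - r) + L) :
    T r L δ x = L / δ * (x - r) + L := max_eq_right h
lemma myT_eq0 (r L δ x : ℝ) (h : L / δ * (x - r) + L ≤ 0) :
    T r L δ x = 0 := max_eq_left h

theorem altruistic_profile_is_nash_equilibrium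
    (r L δ c : ℝ) (hδ : 0 < δ) (hδL : δ < L) (hLc : L < c) (hcδ : c * δ < r * L)
    (hr : 4 * δ < r) (hc₁ : 4 * L ≤ c) (hc₂ : c < (r - 4 * δ) * L / δ)
    (β : ℝ) (hβ : β ∈ Set.Ioc (1 / 2 : ℝ) 1) :
    (∀ x₁ ∈ Set.Icc (0 : ℝ) r,
      Jhat₁ r L δ c β r (r - δ) ≤ Jhat₁ r L δ c β x₁ (r - δ)) ∧
    (∀ x₂ ∈ Set.Icc (0 : ℝ) r, J₂ r L δ c r (r - δ) ≤ J₂ r L δ c r x₂) := by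
  obtain ⟨hβ1, hβ2⟩ := hβ
  have hL : 0 < L := hδ.trans hδL
  have hδ0 : δ ≠ 0 := ne_of_gt hδ
  have hk : 0 < L / δ := div_pos hL hδ
  have hkδ : L / δ * δ = L := div_mul_cancel₀ L hδ0
  have hr0 : 0 < r := by linarith
  have hc2' : c * δ < (r - 4 * δ) * L := (lt_div_iff₀ hδ).mp hc₂
  have h3 : T r L δ (r + (r - (r - δ))) = 2 * L := by
    rw [myT_eq r L δ _ (by nlinarith [hkδ])]
    linear_combination hkδ
  have h4 : T r L δ ((r - δ) + (r - r)) = 0 := by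
    apply myT_eq0
    nlinarith [hkδ]
  constructor
  · intro x₁ hx₁
    obtain ⟨hx0, hxr⟩ := hx₁
    have hs0 : 0 ≤ r - x₁ := by linarith
    have h2 : T r L δ ((r - δ) + (r - x₁)) = L / δ * (r - x₁) := by
      rw [myT_eq r L δ _ (by nlinarith [hkδ, mul_nonneg hk.le hs0])]
      linear_combination -hkδ
    have hM0 := myT_nonneg r L δ (x₁ + (r - (r - δ)))
    have hM1 := myT_ge r L δ (x₁ + (r - (r - δ)))
    set M := T r L δ (x₁ + (r - (r - δ))) with hM
    have hM1' : 2 * L - L / δ * (r - x₁) ≤ M := by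
      have hkδ' : L / δ * ((x₁ + (r - (r - δ))) - r) = L / δ * (r - x₁) * (-1) + L := by
        linear_combination hkδ
      linarith [hM1]
    have hA : 0 ≤ (J₁ r L δ c x₁ (r - δ) + J₂ r L δ c x₁ (r - δ)) -
        (J₁ r L δ c r (r - δ) + J₂ r L δ c r (r - δ)) := by
      simp only [J₁, J₂]
      rw [h2, h3, h4, ← hM]
      nlinarith [mul_le_mul_of_nonneg_left hM1' (by linarith : (0:ℝ) ≤ x₁ + δ),
        mul_nonneg hs0 (by linarith : (0:ℝ) ≤ c - 4 * L),
        mul_nonneg hk.le (mul_self_nonneg (r - x₁)),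
        mul_comm (L/δ) δ, hkδ,
        mul_le_mul_of_nonneg_right (le_of_eq hkδ) hs0]
    have hB : 0 ≤ J₂ r L δ c x₁ (r - δ) - J₂ r L δ c r (r - δ) := by
      simp only [J₂]
      rw [h2, h3, h4, ← hM]
      nlinarith [mul_le_mul_of_nonneg_left hM1' hδ.le,
        mul_nonneg (mul_nonneg (by linarith : (0:ℝ) ≤ r - 2*δ) hk.le) hs0,
        mul_le_mul_of_nonneg_right (le_of_eq hkδ) hs0]
    have hkey : Jhat₁ r L δ c β x₁ (r - δ) - Jhat₁ r L δ c β r (r - δ) =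
        (1 - β) * ((J₁ r L δ c x₁ (r - δ) + J₂ r L δ c x₁ (r - δ)) -
          (J₁ r L δ c r (r - δ) + J₂ r L δ c r (r - δ))) +
        (2 * β - 1) * (J₂ r L δ c x₁ (r - δ) - J₂ r L δ c r (r - δ)) := by
      simp only [Jhat₁]; ring
    have p1 := mul_nonneg (by linarith : (0:ℝ) ≤ 1 - β) hA
    have p2 := mul_nonneg (by linarith : (0:ℝ) ≤ 2 * β - 1) hB
    linarith [hkey, p1, p2]
  · intro x₂ hx₂
    obtain ⟨hx0, hxr⟩ := hx₂
    have ht0 : 0 ≤ r - x₂ := by linarith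
    have h5 : T r L δ (r + (r - x₂)) = L / δ * (r - x₂) + L := by
      rw [myT_eq r L δ _ (by nlinarith [mul_nonneg hk.le ht0])]
      ring_nf
    have hN0 := myT_nonneg r L δ (x₂ + (r - r))
    have hN1 := myT_ge r L δ (x₂ + (r - r))
    set N := T r L δ (x₂ + (r - r)) with hN
    have hN1' : L - L / δ * (r - x₂) ≤ N := by
      have : L / δ * ((x₂ + (r - r)) - r) = L / δ * (r - x₂) * (-1) := by ring
      linarith [hN1]
    simp only [J₂]
    rw [h3, h4, h5, ← hN]
    rcases le_or_gt (r - x₂) δ with hcase | hcase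
    · -- t ≤ δ : use N ≥ L - k t and bracket nonneg
      have e1 := mul_le_mul_of_nonneg_left hN1' hx0
      have e : (r - 4 * δ) * L / δ = L / δ * r - 4 * L := by
        field_simp
      have hq := mul_le_mul_of_nonneg_left hcase (by positivity : (0:ℝ) ≤ 2 * (L / δ))
      have hq2 : 2 * (L / δ) * δ = 2 * L := by linear_combination 2 * hkδ
      have hbr : 0 ≤ L / δ * r - c - 2 * (L / δ) * (r - x₂) - 2 * (L / δ) * δ := by
        linarith [hc₂, e, hq, hq2]
      have hid : x₂ * (L - L / δ * (r - x₂)) + (r - x₂) * (c + (L / δ * (r - x₂) + L)) -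
          δ * (c + 2 * L) =
          (δ - (r - x₂)) * (L / δ * r - c - 2 * (L / δ) * (r - x₂) - 2 * (L / δ) * δ) := by
        linear_combination (2 * δ - r) * hkδ
      have hpr := mul_nonneg (by linarith : (0:ℝ) ≤ δ - (r - x₂)) hbr
      linarith [hid, e1, hpr]
    · -- t ≥ δ : use N ≥ 0
      have q1 : 0 ≤ x₂ * N := mul_nonneg hx0 hN0
      have q2 : δ * (c + L) ≤ (r - x₂) * (c + L) :=
        mul_le_mul_of_nonneg_right (le_of_lt hcase) (by linarith)
      have q3 : 0 ≤ L / δ * ((r - x₂) * (r - x₂) - δ * δ) :=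
        mul_nonneg hk.le (by nlinarith [hcase, hδ])
      have q4 : L / δ * (δ * δ) = L * δ := by linear_combination δ * hkδ
      linarith [q1, q2, q3, q4]
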